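/- Let L : X → X be linear nonexpansive on a real Hilbert space, b ∈ X, and define T(x) = Lx + b. If Fix T is nonempty, then b ∈ ran(Id − L), and for any a with (Id − L)a = b: (i) Fix T = a + Fix L; (ii) P_{Fix T}(x) = P_{Fix L}(x) + P_{(Fix L)^⊥}(a); (iii) T^k x = L^k(x − a) + a for all k. -/

import Mathlib

variable {X : Type*} [NormedAddCommGroup X] [InnerProductSpace ℝ X] [CompleteSpace X]

/-- The fixed-point set `Fix L = {x : L x = x}` of a continuous linear operator,
as a (closed) subspace. -/
noncomputable def fixSpace (L : X →L[ℝ] X) : Submodule ℝ X :=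
  LinearMap.ker ((ContinuousLinearMap.id ℝ X - L : X →L[ℝ] X) : X →ₗ[ℝ] X)

instance (L : X →L[ℝ] X) : CompleteSpace (fixSpace L) :=
  (ContinuousLinearMap.isClosed_ker (ContinuousLinearMap.id ℝ X - L)).completeSpace_coe

/-- let `L` be linear nonexpansive, `b ∈ X`, and `T x = L x + b` with
`Fix T ≠ ∅`.  Then `b ∈ ran (Id − L)`, and for any `a` with `(Id − L) a = b`:
(i) `Fix T = a + Fix L`;
(ii) `P_{Fix T} x = P_{Fix L} x + P_{(Fix L)^⊥} a` (expressed by the nearest-point property of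
the metric projection onto the set `Fix T`);
(iii) `T^k x = L^k (x − a) + a` for all `k`. -/
theorem stmt8 (L : X →L[ℝ] X) (hL : ∀ x, ‖L x‖ ≤ ‖x‖) (b : X)
    (T : X → X) (hT : ∀ x, T x = L x + b)
    (hfix : {x | T x = x}.Nonempty) :
    b ∈ LinearMap.range ((ContinuousLinearMap.id ℝ X - L : X →L[ℝ] X) : X →ₗ[ℝ] X) ∧
      ∀ a : X, (ContinuousLinearMap.id ℝ X - L) a = b →
        ({x | T x = x} = (fun z => a + z) '' (fixSpace L : Set X)) ∧
        (∀ x : X,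
          (Submodule.orthogonalProjectionOnto (fixSpace L) x : X) +
              (Submodule.orthogonalProjectionOnto (fixSpace L)ᗮ a : X) ∈ {x | T x = x} ∧
            ∀ w ∈ {x | T x = x},
              ‖x - ((Submodule.orthogonalProjectionOnto (fixSpace L) x : X) +
                (Submodule.orthogonalProjectionOnto (fixSpace L)ᗮ a : X))‖ ≤ ‖x - w‖) ∧
        (∀ (k : ℕ) (x : X), T^[k] x = (L ^ k) (x - a) + a) := by
  obtain ⟨x₀, hx₀⟩ := hfix
  rw [Set.mem_setOf_eq, hT] at hx₀
  have hb0 : (ContinuousLinearMap.id ℝ X - L) x₀ = b := by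
    rw [ContinuousLinearMap.sub_apply]
    simp only [ContinuousLinearMap.coe_id', id_eq]
    rw [sub_eq_iff_eq_add']
    exact hx₀.symm
  refine ⟨⟨x₀, hb0⟩, ?_⟩
  intro a ha
  have ha' : a - L a = b := by
    simpa [ContinuousLinearMap.sub_apply] using ha
  set F := fixSpace L with hF
  have key : ∀ x : X, x - a ∈ F ↔ T x = x := by
    intro x
    have e : (ContinuousLinearMap.id ℝ X - L) (x - a) = x - (L x + b) := by
      rw [ContinuousLinearMap.sub_apply]
      simp only [ContinuousLinearMap.coe_id', id_eq, map_sub]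
      rw [← ha']; abel
    rw [hF, fixSpace, LinearMap.mem_ker, ContinuousLinearMap.coe_coe, e, sub_eq_zero, hT, eq_comm]
  refine ⟨?_, ?_, ?_⟩
  · -- (i)
    ext x
    simp only [Set.mem_setOf_eq, Set.mem_image, SetLike.mem_coe]
    constructor
    · intro h
      exact ⟨x - a, (key x).mpr h, by abel⟩
    · rintro ⟨z, hz, rfl⟩
      exact (key _).mp (by simpa using hz)
  · -- (ii)
    intro x
    have hproj : (Submodule.orthogonalProjectionOnto Fᗮ a : X) = a - Submodule.orthogonalProjectionOnto F a :=
      Submodule.starProjection_orthogonal_val a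
    set q : X := (Submodule.orthogonalProjectionOnto F x : X) + (Submodule.orthogonalProjectionOnto Fᗮ a : X) with hq
    have hqmem : T q = q := by
      refine (key q).mp ?_
      have : q - a = (Submodule.orthogonalProjectionOnto F x : X) - (Submodule.orthogonalProjectionOnto F a : X) := by
        rw [hq, hproj]; abel
      rw [this]
      exact sub_mem (Submodule.orthogonalProjectionOnto F x).2 (Submodule.orthogonalProjectionOnto F a).2
    refine ⟨hqmem, ?_⟩
    intro w hw
    have hw' : w - a ∈ F := (key w).mpr hw
    set m : X := x - a with hm
    have hPm : (Submodule.orthogonalProjectionOnto F m : X) =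
        (Submodule.orthogonalProjectionOnto F x : X) - (Submodule.orthogonalProjectionOnto F a : X) := by
      rw [hm, map_sub]; rfl
    have hxq : x - q = m - (Submodule.orthogonalProjectionOnto F m : X) := by
      rw [hq, hproj, hPm, hm]; abel
    have hxw : x - w = (m - (Submodule.orthogonalProjectionOnto F m : X)) +
        ((Submodule.orthogonalProjectionOnto F m : X) - (w - a)) := by
      rw [hm]; abel
    have hinner : (inner ℝ (m - (Submodule.orthogonalProjectionOnto F m : X))
        ((Submodule.orthogonalProjectionOnto F m : X) - (w - a)) : ℝ) = 0 :=
      Submodule.starProjection_inner_eq_zero m _ (sub_mem (Submodule.orthogonalProjectionOnto F m).2 hw')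
    have hpyth := norm_add_sq_eq_norm_sq_add_norm_sq_real hinner
    rw [hxq, hxw]
    nlinarith [norm_nonneg (m - (Submodule.orthogonalProjectionOnto F m : X)),
      norm_nonneg ((Submodule.orthogonalProjectionOnto F m : X) - (w - a)),
      norm_nonneg ((m - (Submodule.orthogonalProjectionOnto F m : X)) +
        ((Submodule.orthogonalProjectionOnto F m : X) - (w - a))),
      sq_nonneg (‖(Submodule.orthogonalProjectionOnto F m : X) - (w - a)‖)]
  · -- (iii)
    intro k
    induction k with
    | zero => intro x; simp
    | succ k ih =>
      intro x
      rw [Function.iterate_succ_apply', ih, hT]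
      have hLa : L a + b = a := by rw [← ha']; abel
      rw [map_add, pow_succ']
      rw [ContinuousLinearMap.mul_apply]
      rw [add_assoc, hLa]
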